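/- (Inexact duality.) Let x ∈ ℂⁿ be an s-sparse vector with T = supp(x), let A ∈ ℂ^{m×n} and let X ∈ ℂ^{n×n} be any invertible matrix. Assume that (i) ‖(P_T X A*A P_T)⁻¹‖_∞ ≤ 2 (the inverse taken on the range of P_T), (ii) max_{i ∈ T^c} ‖P_T X A*A e_i‖₂ ≤ 1, and that there exists a vector v in the row space of A satisfying (iii) ‖v_T − sgn(x)‖₂ ≤ 1/4 and (iv) ‖v_{T^c}‖_∞ ≤ 1/4. Then the solution x* of the convex program min ‖x̄‖₁ subject to A x̄ = A x is unique and equal to x. -/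

import Mathlib

open MeasureTheory Matrix Finset ComplexConjugate
open scoped BigOperators Matrix ComplexOrder

noncomputable section

/-- The ℓ₂ (Euclidean) norm of a vector in ℂⁿ. -/
def l2norm {n : ℕ} (v : Fin n → ℂ) : ℝ := Real.sqrt (∑ i, ‖v i‖ ^ 2)

/-- The ℓ₁ norm of a vector in ℂⁿ. -/
def l1norm {n : ℕ} (v : Fin n → ℂ) : ℝ := ∑ i, ‖v i‖

/-- The ℓ∞ norm (maximal absolute entry) of a vector in ℂⁿ. -/
def linfNorm {n : ℕ} (v : Fin n → ℂ) : ℝ := ⨆ i, ‖v i‖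

/-- The sparsity ‖v‖₀ of a vector: the cardinality of its support. -/
def sparsity {n : ℕ} (v : Fin n → ℂ) : ℕ := (Finset.univ.filter fun i => v i ≠ 0).card

/-- Largest s-sparse eigenvalue λ_max(s, M) = sup over s-sparse v ≠ 0 of ‖Mv‖₂/‖v‖₂. -/
def sparseMax {n : ℕ} (s : ℕ) (M : Matrix (Fin n) (Fin n) ℂ) : ℝ :=
  ⨆ v : {v : Fin n → ℂ // v ≠ 0 ∧ sparsity v ≤ s}, l2norm (M.mulVec v.1) / l2norm v.1

/-- Smallest s-sparse eigenvalue λ_min(s, M). -/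
def sparseMin {n : ℕ} (s : ℕ) (M : Matrix (Fin n) (Fin n) ℂ) : ℝ :=
  ⨅ v : {v : Fin n → ℂ // v ≠ 0 ∧ sparsity v ≤ s}, l2norm (M.mulVec v.1) / l2norm v.1

/-- s-sparse condition number cond(s, M) = λ_max(s,M)/λ_min(s,M). -/
def sparseCond {n : ℕ} (s : ℕ) (M : Matrix (Fin n) (Fin n) ℂ) : ℝ :=
  sparseMax s M / sparseMin s M

/-- Operator norm (largest singular value) of a square matrix. -/
def opNorm {n : ℕ} (M : Matrix (Fin n) (Fin n) ℂ) : ℝ :=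
  ⨆ v : {v : Fin n → ℂ // v ≠ 0}, l2norm (M.mulVec v.1) / l2norm v.1

/-- The rank-one matrix a a*. -/
def outer {n : ℕ} (a : Fin n → ℂ) : Matrix (Fin n) (Fin n) ℂ :=
  Matrix.of fun i j => a i * conj (a j)

/-- The covariance matrix E[a a*] of the distribution F. -/
def covMatrix {n : ℕ} (F : Measure (Fin n → ℂ)) : Matrix (Fin n) (Fin n) ℂ :=
  Matrix.of fun i j => ∫ a, a i * conj (a j) ∂F

/-- The sampling matrix A = (1/√m) Σᵢ eᵢ aᵢ*. -/
def samplingMatrix {m n : ℕ} (a : Fin m → Fin n → ℂ) : Matrix (Fin m) (Fin n) ℂ :=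
  Matrix.of fun k j => ((Real.sqrt m : ℂ))⁻¹ * conj (a k j)

/-- Orthogonal projector onto vectors supported on T. -/
def projT {n : ℕ} (T : Finset (Fin n)) : Matrix (Fin n) (Fin n) ℂ :=
  Matrix.of fun i j => if i = j ∧ i ∈ T then 1 else 0

/-- The sign vector sgn(x): xᵢ/|xᵢ| on supp(x) and 0 elsewhere. -/
def sgnVec {n : ℕ} (x : Fin n → ℂ) : Fin n → ℂ :=
  fun i => if x i = 0 then 0 else x i / (‖x i‖ : ℂ)

/-- t is an almost sure bound for both incoherence quantities
    max_i |⟨a,eᵢ⟩|² and max_i |⟨a, E[aa*]⁻¹ eᵢ⟩|². -/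
def IncohBound {n : ℕ} (F : Measure (Fin n → ℂ)) (t : ℝ) : Prop :=
  ∀ᵐ a ∂F, ∀ i, ‖a i‖ ^ 2 ≤ t ∧ ‖∑ j, conj (a j) * (covMatrix F)⁻¹ j i‖ ^ 2 ≤ t

/-- μ is the incoherence parameter: the smallest almost sure incoherence bound. -/
def IsIncoherenceParam {n : ℕ} (F : Measure (Fin n → ℂ)) (μ : ℝ) : Prop :=
  IsLeast {t | IncohBound F t} μ

/-- x is the unique minimizer of the ℓ₁ norm among solutions of A x̄ = A x. -/
def UniqueL1Min {m n : ℕ} (A : Matrix (Fin m) (Fin n) ℂ) (x : Fin n → ℂ) : Prop :=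
  ∀ y : Fin n → ℂ, A.mulVec y = A.mulVec x → y ≠ x → l1norm x < l1norm y

-- helper lemmas

def el {n : ℕ} (v : Fin n → ℂ) : EuclideanSpace ℂ (Fin n) := (WithLp.equiv 2 (Fin n → ℂ)).symm v

lemma l2norm_eq {n : ℕ} (v : Fin n → ℂ) : l2norm v = ‖el v‖ := by
  rw [EuclideanSpace.norm_eq]; rfl

lemma l2norm_nonneg {n : ℕ} (v : Fin n → ℂ) : 0 ≤ l2norm v := by
  rw [l2norm_eq]; exact norm_nonneg _

lemma l2norm_eq_zero {n : ℕ} {v : Fin n → ℂ} (h : l2norm v = 0) : v = 0 := by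
  rw [l2norm_eq, norm_eq_zero] at h
  have h2 : el v = el 0 := by rw [h]; simp [el]
  exact (WithLp.equiv 2 (Fin n → ℂ)).symm.injective h2

lemma l2norm_neg {n : ℕ} (v : Fin n → ℂ) : l2norm (-v) = l2norm v := by
  rw [l2norm_eq, l2norm_eq]; exact norm_neg (el v)

lemma l2norm_sub_rev {n : ℕ} (u v : Fin n → ℂ) : l2norm (u - v) = l2norm (v - u) := by
  rw [l2norm_eq, l2norm_eq]; exact norm_sub_rev (el u) (el v)

lemma cauchy {n : ℕ} (u w : Fin n → ℂ) :
    ‖∑ i, conj (u i) * w i‖ ≤ l2norm u * l2norm w := by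
  have : (∑ i, conj (u i) * w i) = (inner ℂ (el u) (el w) : ℂ) := by
    rw [PiLp.inner_apply]
    refine Finset.sum_congr rfl fun i _ => ?_
    simp [el, mul_comm]
  rw [this, l2norm_eq, l2norm_eq]
  exact norm_inner_le_norm _ _

lemma projT_mulVec {n : ℕ} (T : Finset (Fin n)) (v : Fin n → ℂ) (i : Fin n) :
    (projT T).mulVec v i = if i ∈ T then v i else 0 := by
  simp only [projT, Matrix.mulVec, dotProduct, Matrix.of_apply]
  rw [Finset.sum_eq_single i]
  · by_cases h : i ∈ T <;> simp [h]
  · intro b _ hb; simp [Ne.symm hb]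
  · simp

lemma linf_bound {n : ℕ} (v : Fin n → ℂ) (i : Fin n) : ‖v i‖ ≤ linfNorm v :=
  le_ciSup (f := fun j => ‖v j‖) (Set.Finite.bddAbove (Set.finite_range _)) i

lemma mulVec_frob {n : ℕ} (M : Matrix (Fin n) (Fin n) ℂ) (v : Fin n → ℂ) :
    l2norm (M.mulVec v) ≤ Real.sqrt (∑ i, ∑ j, ‖M i j‖ ^ 2) * l2norm v := by
  have row : ∀ i, ‖M.mulVec v i‖ ≤ l2norm (fun j => conj (M i j)) * l2norm v := by
    intro i
    have : M.mulVec v i = ∑ j, conj ((fun j => conj (M i j)) j) * v j := by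
      simp [Matrix.mulVec, dotProduct]
    rw [this]
    exact cauchy _ _
  have hr2 : ∀ i, l2norm (fun j => conj (M i j)) ^ 2 = ∑ j, ‖M i j‖ ^ 2 := by
    intro i
    rw [l2norm, Real.sq_sqrt (by positivity)]
    simp [RCLike.norm_conj]
  rw [l2norm]
  have h1 : ∑ i, ‖M.mulVec v i‖ ^ 2 ≤ ∑ i, (l2norm (fun j => conj (M i j)) * l2norm v) ^ 2 :=
    Finset.sum_le_sum fun i _ => pow_le_pow_left₀ (norm_nonneg _) (row i) 2
  refine le_trans (Real.sqrt_le_sqrt h1) ?_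
  have h2 : ∑ i, (l2norm (fun j => conj (M i j)) * l2norm v) ^ 2
      = (∑ i, ∑ j, ‖M i j‖ ^ 2) * l2norm v ^ 2 := by
    rw [Finset.sum_mul]
    congr 1; funext i
    rw [mul_pow, hr2]
  rw [h2, Real.sqrt_mul (by positivity), Real.sqrt_sq (l2norm_nonneg v)]

lemma l2norm_pos {n : ℕ} {v : Fin n → ℂ} (h : v ≠ 0) : 0 < l2norm v := by
  rcases lt_or_eq_of_le (l2norm_nonneg v) with h' | h'
  · exact h'
  · exact absurd (l2norm_eq_zero h'.symm) h

lemma opNorm_mulVec_le {n : ℕ} {M : Matrix (Fin n) (Fin n) ℂ} {c : ℝ}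
    (h : opNorm M ≤ c) (v : Fin n → ℂ) : l2norm (M.mulVec v) ≤ c * l2norm v := by
  by_cases hv : v = 0
  · subst hv
    have h0 : l2norm (0 : Fin n → ℂ) = 0 := by simp [l2norm]
    simp only [Matrix.mulVec_zero, h0, mul_zero, le_refl]
  · have hbdd : BddAbove (Set.range fun v : {v : Fin n → ℂ // v ≠ 0} =>
        l2norm (M.mulVec v.1) / l2norm v.1) := by
      refine ⟨Real.sqrt (∑ i, ∑ j, ‖M i j‖ ^ 2), ?_⟩
      rintro _ ⟨⟨u, hu⟩, rfl⟩
      rw [div_le_iff₀ (l2norm_pos hu)]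
      exact mulVec_frob M u
    have hle : l2norm (M.mulVec v) / l2norm v ≤ opNorm M :=
      le_ciSup (f := fun v : {v : Fin n → ℂ // v ≠ 0} =>
        l2norm (M.mulVec v.1) / l2norm v.1) hbdd ⟨v, hv⟩
    have := le_trans hle h
    rwa [div_le_iff₀ (l2norm_pos hv)] at this

lemma re_ge_neg_norm (z : ℂ) : -‖z‖ ≤ z.re := by
  have h1 : |z.re| ≤ ‖z‖ := Complex.abs_re_le_norm z
  linarith [neg_abs_le z.re]


/-- Inexact duality: the existence of an inexact dual certificate together with the
local isometry and off-support conditions implies exact and unique ℓ₁ recovery. -/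
theorem statement11 {n m s : ℕ} (x : Fin n → ℂ) (hx : sparsity x ≤ s)
    (T : Finset (Fin n)) (hT : T = Finset.univ.filter fun i => x i ≠ 0)
    (A : Matrix (Fin m) (Fin n) ℂ)
    (X : Matrix (Fin n) (Fin n) ℂ) (hX : IsUnit X)
    -- (i) ‖(P_T X A*A P_T)⁻¹‖_∞ ≤ 2, the inverse B taken on the range of P_T
    (B : Matrix (Fin n) (Fin n) ℂ)
    (hB1 : B * (projT T * X * Aᴴ * A * projT T) = projT T)
    (hB2 : (projT T * X * Aᴴ * A * projT T) * B = projT T)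
    (hB3 : projT T * B * projT T = B)
    (hBnorm : opNorm B ≤ 2)
    -- (ii) max_{i ∈ T^c} ‖P_T X A*A eᵢ‖₂ ≤ 1
    (hoff : ∀ i ∉ T, l2norm ((projT T * (X * Aᴴ * A)).mulVec (Pi.single i 1)) ≤ 1)
    -- (iii), (iv): v = A* w is in the row space of A and is an inexact dual certificate
    (v : Fin n → ℂ) (w : Fin m → ℂ) (hv : v = Aᴴ.mulVec w)
    (hv1 : l2norm ((projT T).mulVec v - sgnVec x) ≤ 1 / 4)
    (hv2 : linfNorm ((projT Tᶜ).mulVec v) ≤ 1 / 4) :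
    UniqueL1Min A x := by
  intro y hAy hne
  classical
  set h : Fin n → ℂ := y - x with hhdef
  have hAh : A.mulVec h = 0 := by
    rw [hhdef, Matrix.mulVec_sub, hAy, sub_self]
  have hxT : ∀ i, i ∉ T → x i = 0 := by
    intro i hi
    by_contra hxi
    exact hi (hT ▸ Finset.mem_filter.mpr ⟨Finset.mem_univ i, hxi⟩)
  have hxTmem : ∀ i ∈ T, x i ≠ 0 := by
    intro i hi
    rw [hT] at hi
    exact (Finset.mem_filter.mp hi).2
  have hy : ∀ i, y i = x i + h i := by intro i; simp [hhdef]
  set hT' : Fin n → ℂ := (projT T).mulVec h with hT'def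
  set hTc : Fin n → ℂ := (projT Tᶜ).mulVec h with hTcdef
  have hT'i : ∀ i, hT' i = if i ∈ T then h i else 0 := fun i => projT_mulVec T h i
  have hTci : ∀ i, hTc i = if i ∈ T then 0 else h i := by
    intro i
    rw [hTcdef, projT_mulVec]
    by_cases hi : i ∈ T <;> simp [hi]
  have hsplit : h = hT' + hTc := by
    funext i
    simp only [Pi.add_apply, hT'i, hTci]
    by_cases hi : i ∈ T <;> simp [hi]
  set S1 : ℝ := ∑ i ∈ Tᶜ, ‖h i‖ with hS1def
  have hS1nonneg : 0 ≤ S1 := Finset.sum_nonneg fun i _ => norm_nonneg _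
  set M0 : Matrix (Fin n) (Fin n) ℂ := projT T * (X * Aᴴ * A) with hM0
  -- M0 h = 0
  have hM0h : M0.mulVec h = 0 := by
    have e1 : M0 = (projT T * (X * Aᴴ)) * A := by
      rw [hM0]; exact (Matrix.mul_assoc (projT T) (X * Aᴴ) A).symm
    rw [e1, ← Matrix.mulVec_mulVec, hAh, Matrix.mulVec_zero]
  have hB1' : B * (M0 * projT T) = projT T := by
    have eassoc : M0 * projT T = projT T * X * Aᴴ * A * projT T := by
      rw [hM0]
      have e9 : projT T * (X * Aᴴ * A) = projT T * X * Aᴴ * A := by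
        rw [← Matrix.mul_assoc, ← Matrix.mul_assoc]
      rw [e9]
    rw [eassoc]; exact hB1
  have hPTh : hT' = B.mulVec (M0.mulVec hT') := by
    conv_lhs => rw [hT'def, ← hB1']
    rw [← Matrix.mulVec_mulVec, ← Matrix.mulVec_mulVec]
  have hMT : M0.mulVec hT' = -(M0.mulVec hTc) := by
    have e2 : (0 : Fin n → ℂ) = M0.mulVec hT' + M0.mulVec hTc := by
      rw [← Matrix.mulVec_add, ← hsplit, hM0h]
    exact eq_neg_of_add_eq_zero_left e2.symm
  have hkey : hT' = B.mulVec (-(M0.mulVec hTc)) := by rw [← hMT]; exact hPTh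
  -- ‖hT'‖₂ ≤ 2 ‖M0 hTc‖₂
  have hnormT : l2norm hT' ≤ 2 * l2norm (M0.mulVec hTc) := by
    have hb := opNorm_mulVec_le hBnorm (-(M0.mulVec hTc))
    rw [← hkey, l2norm_neg] at hb
    exact hb
  -- ‖M0 hTc‖₂ ≤ S1
  have hTc_sum : hTc = ∑ i ∈ Tᶜ, h i • (Pi.single i (1 : ℂ) : Fin n → ℂ) := by
    funext j
    rw [Finset.sum_apply]
    simp only [Pi.smul_apply, Pi.single_apply, smul_eq_mul, mul_ite, mul_one, mul_zero]
    rw [Finset.sum_ite_eq Tᶜ j h, hTci]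
    by_cases hj : j ∈ T <;> simp [hj]
  have hM0Tc : l2norm (M0.mulVec hTc) ≤ S1 := by
    have e3 : M0.mulVec hTc = ∑ i ∈ Tᶜ, h i • M0.mulVec (Pi.single i 1) := by
      rw [hTc_sum]
      have e3' := map_sum M0.mulVecLin (fun i => h i • (Pi.single i (1 : ℂ) : Fin n → ℂ)) Tᶜ
      simp only [LinearMap.map_smul, Matrix.mulVecLin_apply] at e3'
      exact e3'
    rw [e3]
    calc l2norm (∑ i ∈ Tᶜ, h i • M0.mulVec (Pi.single i 1))
        ≤ ∑ i ∈ Tᶜ, ‖h i‖ * l2norm (M0.mulVec (Pi.single i 1)) := by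
          rw [l2norm_eq]
          have hel : el (∑ i ∈ Tᶜ, h i • M0.mulVec (Pi.single i 1))
              = ∑ i ∈ Tᶜ, h i • el (M0.mulVec (Pi.single i 1)) := by
            ext j; simp [el]
          rw [hel]
          refine le_trans (norm_sum_le _ _) (Finset.sum_le_sum fun i _ => ?_)
          rw [norm_smul, l2norm_eq]
      _ ≤ ∑ i ∈ Tᶜ, ‖h i‖ * 1 := Finset.sum_le_sum fun i hi =>
          mul_le_mul_of_nonneg_left (hoff i (Finset.mem_compl.mp hi)) (norm_nonneg _)
      _ = S1 := by simp [hS1def]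
  have hT'S1 : l2norm hT' ≤ 2 * S1 := le_trans hnormT (by linarith)
  -- v orthogonal to h
  have hvh : ∑ i, conj (v i) * h i = 0 := by
    have hconj : ∀ i, conj (v i) = ∑ k, A k i * conj (w k) := by
      intro i
      rw [hv]
      simp [Matrix.mulVec, dotProduct, Matrix.conjTranspose_apply, map_sum]
    calc ∑ i, conj (v i) * h i = ∑ i, (∑ k, A k i * conj (w k)) * h i :=
          Finset.sum_congr rfl fun i _ => by rw [hconj]
      _ = ∑ i, ∑ k, A k i * conj (w k) * h i := by
          refine Finset.sum_congr rfl fun i _ => ?_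
          rw [Finset.sum_mul]
      _ = ∑ k, ∑ i, A k i * conj (w k) * h i := Finset.sum_comm
      _ = ∑ k, conj (w k) * (A.mulVec h k) := by
          refine Finset.sum_congr rfl fun k _ => ?_
          simp only [Matrix.mulVec, dotProduct, Finset.mul_sum]
          exact Finset.sum_congr rfl fun i _ => by ring
      _ = 0 := by rw [hAh]; simp
  -- sgn facts
  set sg : Fin n → ℂ := sgnVec x with hsg
  have hsg0 : ∀ i, i ∉ T → sg i = 0 := by
    intro i hi
    simp [hsg, sgnVec, hxT i hi]
  have hsgx : ∀ i ∈ T, (conj (sg i) * x i) = (‖x i‖ : ℂ) := by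
    intro i hi
    have hxi := hxTmem i hi
    have hnx : (‖x i‖ : ℂ) ≠ 0 := by
      simp only [ne_eq, Complex.ofReal_eq_zero, norm_eq_zero]
      exact hxi
    have hsgi : sg i = x i / (‖x i‖ : ℂ) := by simp [hsg, sgnVec, hxi]
    rw [hsgi, map_div₀, Complex.conj_ofReal, div_mul_eq_mul_div, RCLike.conj_mul]
    rw [div_eq_iff hnx]
    push_cast
    ring_nf
    norm_cast
  have hsgnorm : ∀ i ∈ T, ‖sg i‖ = 1 := by
    intro i hi
    have hxi := hxTmem i hi
    simp only [hsg, sgnVec, if_neg hxi]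
    rw [norm_div, Complex.norm_real, Real.norm_eq_abs, abs_of_nonneg (norm_nonneg _)]
    rw [div_self (norm_ne_zero_iff.mpr hxi)]
  -- entrywise bound on T
  have hentry : ∀ i ∈ T, ‖x i‖ + (conj (sg i) * h i).re ≤ ‖y i‖ := by
    intro i hi
    have e4 : conj (sg i) * y i = (‖x i‖ : ℂ) + conj (sg i) * h i := by
      rw [hy i, mul_add, hsgx i hi]
    have e5 : (conj (sg i) * y i).re ≤ ‖y i‖ := by
      refine le_trans (Complex.re_le_norm _) ?_
      rw [norm_mul, RCLike.norm_conj, hsgnorm i hi, one_mul]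
    rw [e4] at e5
    simpa using e5
  set g : Fin n → ℂ := (projT T).mulVec v with hg
  set vTc : Fin n → ℂ := (projT Tᶜ).mulVec v with hvTc
  have hgi : ∀ i, g i = if i ∈ T then v i else 0 := fun i => projT_mulVec T v i
  have hvTci : ∀ i, vTc i = if i ∈ T then 0 else v i := by
    intro i
    rw [hvTc, projT_mulVec]
    by_cases hi : i ∈ T <;> simp [hi]
  set c1 : ℂ := ∑ i, conj ((sg - g) i) * hT' i with hc1
  set c2 : ℂ := ∑ i, conj (vTc i) * hTc i with hc2
  -- RT = c1 - c2
  have hRT : ∑ i ∈ T, conj (sg i) * h i = c1 - c2 := by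
    have e6 : c1 = ∑ i ∈ T, conj (sg i - g i) * h i := by
      rw [hc1, ← Finset.sum_add_sum_compl T]
      have z1 : ∑ i ∈ Tᶜ, conj ((sg - g) i) * hT' i = 0 :=
        Finset.sum_eq_zero fun i hi => by
          rw [hT'i i, if_neg (Finset.mem_compl.mp hi), mul_zero]
      rw [z1, add_zero]
      refine Finset.sum_congr rfl fun i hi => ?_
      rw [hT'i i, if_pos hi]; rfl
    have e7 : c2 = ∑ i ∈ Tᶜ, conj (v i) * h i := by
      rw [hc2, ← Finset.sum_add_sum_compl T]
      have z2 : ∑ i ∈ T, conj (vTc i) * hTc i = 0 :=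
        Finset.sum_eq_zero fun i hi => by
          rw [hvTci i, if_pos hi, map_zero, zero_mul]
      rw [z2, zero_add]
      refine Finset.sum_congr rfl fun i hi => ?_
      rw [hvTci i, if_neg (Finset.mem_compl.mp hi), hTci i, if_neg (Finset.mem_compl.mp hi)]
    have e8 : ∑ i ∈ T, conj (g i) * h i = - c2 := by
      have : ∑ i ∈ T, conj (g i) * h i = ∑ i ∈ T, conj (v i) * h i :=
        Finset.sum_congr rfl fun i hi => by rw [hgi i, if_pos hi]
      rw [this, e7]
      have := Finset.sum_add_sum_compl T (fun i => conj (v i) * h i)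
      rw [hvh] at this
      linear_combination this
    calc ∑ i ∈ T, conj (sg i) * h i
        = ∑ i ∈ T, (conj (sg i - g i) * h i + conj (g i) * h i) := by
          refine Finset.sum_congr rfl fun i _ => ?_
          rw [map_sub]; ring
      _ = (∑ i ∈ T, conj (sg i - g i) * h i) + ∑ i ∈ T, conj (g i) * h i :=
          Finset.sum_add_distrib
      _ = c1 - c2 := by rw [← e6, e8]; ring
  -- bounds on c1 c2
  have hc1bound : ‖c1‖ ≤ (1 / 4) * (2 * S1) := by
    have := cauchy (sg - g) hT'
    have hsggnorm : l2norm (sg - g) ≤ 1 / 4 := by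
      rw [l2norm_sub_rev]
      exact hv1
    calc ‖c1‖ ≤ l2norm (sg - g) * l2norm hT' := this
      _ ≤ (1 / 4) * (2 * S1) :=
        mul_le_mul hsggnorm hT'S1 (l2norm_nonneg _) (by norm_num)
  have hc2bound : ‖c2‖ ≤ (1 / 4) * S1 := by
    have hTcnorm : ∑ i, ‖hTc i‖ = S1 := by
      rw [hS1def, ← Finset.sum_add_sum_compl T (fun i => ‖hTc i‖)]
      have z3 : ∑ i ∈ T, ‖hTc i‖ = 0 :=
        Finset.sum_eq_zero fun i hi => by rw [hTci i, if_pos hi, norm_zero]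
      rw [z3, zero_add]
      exact Finset.sum_congr rfl fun i hi => by
        rw [hTci i, if_neg (Finset.mem_compl.mp hi)]
    calc ‖c2‖ ≤ ∑ i, ‖conj (vTc i) * hTc i‖ := norm_sum_le _ _
      _ ≤ ∑ i, (1 / 4) * ‖hTc i‖ := by
          refine Finset.sum_le_sum fun i _ => ?_
          rw [norm_mul, RCLike.norm_conj]
          exact mul_le_mul_of_nonneg_right (le_trans (linf_bound _ i) hv2) (norm_nonneg _)
      _ = (1 / 4) * S1 := by rw [← Finset.mul_sum, hTcnorm]
  -- main inequality
  have hmain : l1norm x + (∑ i ∈ T, conj (sg i) * h i).re + S1 ≤ l1norm y := by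
    have hsum : l1norm y = ∑ i ∈ T, ‖y i‖ + ∑ i ∈ Tᶜ, ‖y i‖ :=
      (Finset.sum_add_sum_compl T _).symm
    have hl1x : l1norm x = ∑ i ∈ T, ‖x i‖ := by
      rw [l1norm, ← Finset.sum_add_sum_compl T]
      have z4 : ∑ i ∈ Tᶜ, ‖x i‖ = 0 :=
        Finset.sum_eq_zero fun i hi => by rw [hxT i (Finset.mem_compl.mp hi), norm_zero]
      rw [z4, add_zero]
    have hTcpart : ∑ i ∈ Tᶜ, ‖y i‖ = S1 := by
      refine Finset.sum_congr rfl fun i hi => ?_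
      rw [hy i, hxT i (Finset.mem_compl.mp hi), zero_add]
    have hre : (∑ i ∈ T, conj (sg i) * h i).re = ∑ i ∈ T, (conj (sg i) * h i).re := by
      rw [Complex.re_sum]
    rw [hsum, hTcpart, hl1x, hre]
    have := Finset.sum_le_sum (f := fun i => ‖x i‖ + (conj (sg i) * h i).re)
      (g := fun i => ‖y i‖) (s := T) (fun i hi => hentry i hi)
    rw [Finset.sum_add_distrib] at this
    linarith
  -- finish
  have hRTre : (∑ i ∈ T, conj (sg i) * h i).re ≥ -(3 / 4) * S1 := by
    rw [hRT]
    have r1 : (c1 - c2).re = c1.re - c2.re := by simp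
    rw [r1]
    have b1 : -‖c1‖ ≤ c1.re := re_ge_neg_norm c1
    have b2 : |c2.re| ≤ ‖c2‖ := by
      exact Complex.abs_re_le_norm c2
    have b2' : c2.re ≤ ‖c2‖ := le_trans (le_abs_self _) b2
    linarith
  have hS1pos : 0 < S1 := by
    rcases lt_or_eq_of_le hS1nonneg with hp | hp
    · exact hp
    · exfalso
      have hz : ∀ i ∈ Tᶜ, h i = 0 := by
        intro i hi
        have := (Finset.sum_eq_zero_iff_of_nonneg (fun i _ => norm_nonneg (h i))).mp hp.symm i hi
        exact norm_eq_zero.mp this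
      have hTcz : hTc = 0 := by
        funext i
        rw [hTci i]
        by_cases hi : i ∈ T
        · simp [hi]
        · simp only [if_neg hi]
          exact hz i (Finset.mem_compl.mpr hi)
      have hT'z : hT' = 0 := by
        apply l2norm_eq_zero
        have : l2norm hT' ≤ 2 * S1 := hT'S1
        rw [← hp] at this
        have := le_antisymm (by linarith) (l2norm_nonneg hT')
        linarith [this]
      have : h = 0 := by rw [hsplit, hT'z, hTcz, add_zero]
      rw [hhdef] at this
      exact hne (sub_eq_zero.mp this)
  have : l1norm x + S1 / 4 ≤ l1norm y := by
    have := hmain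
    linarith [hRTre]
  linarith
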